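/- Assume κ = κ^{<κ} is an infinite cardinal and o is an iterand satisfying the combinatorial clauses. Suppose p_i ∈ Q_o with tr_{p_i} = x_i for i < i_*, the sequence ⟨x_i : i < i_*⟩ lies in dom(plus_{TR_o}) with y := plus_{TR_o}(⟨x_i : i < i_*⟩), i_* < σ_o(x_0), and |⋃_{i<i_*} F_{p_i}| < σ_o(y). Then (y, ⋃_{i<i_*} F_{p_i}) is a condition of Q_o and is a common upper bound of {p_i : i < i_*} in (Q_o, ≤_{Q_o}). -/

import Mathlib

universe u

open Cardinal

/-- The data of a putative `κ`-trunk controller: a carrier with a binary relation and a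
minimum element, a partial "least upper bound" operation `plus` on sequences of elements
indexed by sets of ordinals (with `plusDefined` recording its domain), and a set `S`
together with partial `{0,1}`-valued functions `val x : S → Option Bool`. -/
structure TrunkData (κ : Cardinal.{u}) : Type (u + 1) where
  Carrier : Type u
  le : Carrier → Carrier → Prop
  bot : Carrier
  plusDefined : ∀ s : Set Ordinal.{u}, (s → Carrier) → Prop
  plus : ∀ s : Set Ordinal.{u}, (s → Carrier) → Carrier
  S : Type u
  val : Carrier → S → Option Bool

/-- `T` is a `κ`-trunk controller. -/
structure IsTrunkController (κ : Cardinal.{u}) (T : TrunkData.{u} κ) : Prop where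
  le_refl : ∀ x, T.le x x
  le_trans : ∀ {x y z}, T.le x y → T.le y z → T.le x z
  le_antisymm : ∀ {x y}, T.le x y → T.le y x → x = y
  bot_le : ∀ x, T.le T.bot x
  /-- `plus` is only defined on sequences of length `< κ`. -/
  plusDefined_card_lt : ∀ (s : Set Ordinal.{u}) (f : s → T.Carrier),
    T.plusDefined s f → #s < Cardinal.lift.{u + 1} κ
  /-- whenever defined, the value of `plus` is an upper bound of the terms … -/
  plus_upperBound : ∀ (s : Set Ordinal.{u}) (f : s → T.Carrier),
    T.plusDefined s f → ∀ i, T.le (f i) (T.plus s f)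
  /-- … and is a least upper bound. -/
  plus_least : ∀ (s : Set Ordinal.{u}) (f : s → T.Carrier),
    T.plusDefined s f → ∀ x, (∀ i, T.le (f i) x) → T.le (T.plus s f) x
  /-- axiom (i): every increasing sequence of length `< κ` is in the domain of `plus`. -/
  increasing_plusDefined : ∀ (s : Set Ordinal.{u}) (f : s → T.Carrier),
    #s < Cardinal.lift.{u + 1} κ →
    (∀ i j : s, (i : Ordinal.{u}) ≤ (j : Ordinal.{u}) → T.le (f i) (f j)) →
    T.plusDefined s f
  /-- axiom (ii): among `κ⁺` many `ζ`-tuples there are two which are pairwise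
  in the domain of `plus`. -/
  pairing : ∀ ζ : Ordinal.{u}, ζ < κ.ord →
    ∀ x : Ordinal.{u} → Ordinal.{u} → T.Carrier,
      ∃ α β : Ordinal.{u}, α < β ∧ β < (Order.succ κ).ord ∧
        ∀ ε < ζ, T.plusDefined {α, β} fun γ => x (γ : Ordinal.{u}) ε
  val_mono : ∀ {x y}, T.le x y → ∀ s b, T.val x s = some b → T.val y s = some b

section Product

variable {κ : Cardinal.{u}} {I : Type u}

/-- The support of an element of the `<κ`-support product. -/
def prodSupport (T : I → TrunkData.{u} κ) (f : (i : I) → Option ((T i).Carrier)) : Set I :=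
  {i | f i ≠ none}

/-- Elements of the `<κ`-support product: partial choice functions with support of size `< κ`. -/
def ProdCarrier (T : I → TrunkData.{u} κ) : Type u :=
  { f : (i : I) → Option ((T i).Carrier) // #(prodSupport T f) < κ }

/-- The everywhere-undefined function, i.e. the function with empty domain. -/
def prodBot (T : I → TrunkData.{u} κ) (hκ : ℵ₀ ≤ κ) : ProdCarrier T :=
  ⟨fun _ => none, by
    have h : prodSupport T (fun _ => none) = ∅ := by ext i; simp [prodSupport]
    rw [h]
    simpa using lt_of_lt_of_le Cardinal.aleph0_pos hκ⟩

/-- Given a sequence `F` of elements of the product and a coordinate `i`, the set of indices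
`ε ∈ s` at which `F ε` is defined at `i`. -/
def idxSet (T : I → TrunkData.{u} κ) (s : Set Ordinal.{u}) (F : s → ProdCarrier T)
    (i : I) : Set Ordinal.{u} :=
  {ε | ∃ h : ε ∈ s, ((F ⟨ε, h⟩).1 i).isSome = true}

/-- The sequence of `i`-th coordinates of `F`. -/
noncomputable def idxFun (T : I → TrunkData.{u} κ) (s : Set Ordinal.{u})
    (F : s → ProdCarrier T) (i : I) : idxSet T s F i → (T i).Carrier := fun ε => by
  have h : ∃ h : (ε : Ordinal.{u}) ∈ s, ((F ⟨ε, h⟩).1 i).isSome = true := ε.2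
  exact ((F ⟨(ε : Ordinal.{u}), h.choose⟩).1 i).get h.choose_spec

/-- Definedness of `plus` in the product: the sequence has length `< κ` and at each coordinate
in the union of the supports, the coordinatewise `plus` is defined. -/
def prodPlusDefined (T : I → TrunkData.{u} κ) (s : Set Ordinal.{u})
    (F : s → ProdCarrier T) : Prop :=
  #s < Cardinal.lift.{u + 1} κ ∧ ∀ i : I, (idxSet T s F i).Nonempty →
    (T i).plusDefined (idxSet T s F i) (idxFun T s F i)

open Classical in
/-- The value of `plus` in the product: computed coordinatewise on the union of the supports. -/
noncomputable def prodPlus (T : I → TrunkData.{u} κ) (hκ : ℵ₀ ≤ κ) (s : Set Ordinal.{u})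
    (F : s → ProdCarrier T) : ProdCarrier T :=
  if h : #{i : I | (idxSet T s F i).Nonempty} < κ then
    ⟨fun i => if hi : (idxSet T s F i).Nonempty
        then some ((T i).plus (idxSet T s F i) (idxFun T s F i)) else none, by
      refine lt_of_le_of_lt (Cardinal.mk_le_mk_of_subset ?_) h
      intro i hi
      simp only [Set.mem_setOf_eq]
      by_contra hn
      apply hi
      show (if hi : (idxSet T s F i).Nonempty
        then some ((T i).plus (idxSet T s F i) (idxFun T s F i)) else none) = none
      exact dif_neg hn⟩
  else prodBot T hκ

/-- The `<κ`-support product `∏^{<κ}_{i ∈ I} T i` of a family of trunk-controller data. -/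
noncomputable def prodData (T : I → TrunkData.{u} κ) (hκ : ℵ₀ ≤ κ) : TrunkData.{u} κ where
  Carrier := ProdCarrier T
  le f g := ∀ (i : I) (x : (T i).Carrier), f.1 i = some x →
    ∃ y : (T i).Carrier, g.1 i = some y ∧ (T i).le x y
  bot := prodBot T hκ
  plusDefined := prodPlusDefined T
  plus := prodPlus T hκ
  S := Σ i : I, (T i).S
  val f p :=
    match f.1 p.1 with
    | none => none
    | some x => (T p.1).val x p.2

end Product

/-- An iterand `o` satisfying the combinatorial clauses: a `κ`-trunk controller `TR`,
an atomic forcing (a quasi-order) `At` with trunk function `tr`, a nondecreasing cardinal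
function `σ` with values in `[2, κ]`, sets `A p` of possible trunks of extensions,
and the two demands (F) and (G). -/
structure Iterand (κ : Cardinal.{u}) : Type (u + 1) where
  TR : TrunkData.{u} κ
  isTC : IsTrunkController κ TR
  /-- the atomic forcing `Q_o^at` … -/
  At : Type u
  /-- … with its quasi-order. -/
  atLE : At → At → Prop
  atLE_refl : ∀ p, atLE p p
  atLE_trans : ∀ {p q r}, atLE p q → atLE q r → atLE p r
  /-- the trunk of an atomic condition. -/
  tr : At → TR.Carrier
  tr_mono : ∀ {p q}, atLE p q → TR.le (tr p) (tr q)
  /-- the function `σ_o : |TR_o| → [2, κ]`. -/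
  σ : TR.Carrier → Cardinal.{u}
  two_le_σ : ∀ x, 2 ≤ σ x
  σ_le_kappa : ∀ x, σ x ≤ κ
  σ_mono : ∀ {x y}, TR.le x y → σ x ≤ σ y
  /-- `A p ⊆ {tr q : q ≥ p}` … -/
  A : At → Set TR.Carrier
  A_sub : ∀ p, ∀ x ∈ A p, ∃ q, atLE p q ∧ tr q = x
  /-- … is upward closed. -/
  A_upward : ∀ p, ∀ x ∈ A p, ∀ y, TR.le x y → y ∈ A p
  /-- clause (F): every `≤`-increasing, `σ`-truly increasing sequence of limit length `< κ`
  has a least upper bound whose trunk is the `plus` of the trunks. -/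
  clauseF : ∀ δ : Ordinal.{u}, Order.IsSuccLimit δ → δ < κ.ord →
    ∀ p : Set.Iio δ → At,
      (∀ i j : Set.Iio δ, (i : Ordinal.{u}) ≤ (j : Ordinal.{u}) → atLE (p i) (p j)) →
      (∀ i j : Set.Iio δ, (i : Ordinal.{u}) < (j : Ordinal.{u}) →
        σ (tr (p i)) < σ (tr (p j)) ∨ (σ (tr (p i)) = κ ∧ σ (tr (p j)) = κ)) →
      ∃ q, (∀ i, atLE (p i) q) ∧ (∀ r, (∀ i, atLE (p i) r) → atLE q r) ∧
        tr q = TR.plus (Set.Iio δ) fun i => tr (p i)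
  /-- clause (G): conditions with σ-constant trunks, fewer than `σ` of them, whose trunks
  lie in the domain of `plus`, have a common upper bound whose trunk lies in all the `A`s. -/
  clauseG : ∀ i_star : Ordinal.{u}, 0 < i_star →
    ∀ p : Set.Iio i_star → At, ∀ c : Cardinal.{u},
      (∀ i, σ (tr (p i)) = c) → i_star < c.ord →
      TR.plusDefined (Set.Iio i_star) (fun i => tr (p i)) →
      ∃ q, (∀ i, atLE (p i) q) ∧ ∀ i, tr q ∈ A (p i)

variable {κ : Cardinal.{u}}

/-- A condition of the derived forcing `Q_o`: a pair `(tr_p, F_p)` with `F_p` a set of atomic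
conditions of size `< σ(tr_p)`, all of whose trunks are `≤ tr_p`, with `tr_p ∈ A q` for
`q ∈ F_p`. -/
def IsCond (o : Iterand.{u} κ) (p : o.TR.Carrier × Set o.At) : Prop :=
  #p.2 < o.σ p.1 ∧ ∀ q ∈ p.2, o.TR.le (o.tr q) p.1 ∧ p.1 ∈ o.A q

/-- The order of the derived forcing `Q_o`. -/
def condLE (o : Iterand.{u} κ) (p q : o.TR.Carrier × Set o.At) : Prop :=
  o.TR.le p.1 q.1 ∧ p.2 ⊆ q.2

/-- Assume `κ = κ^{<κ}` is an infinite cardinal and `o` is an iterand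
satisfying the combinatorial clauses.  Suppose `p i ∈ Q_o` with `tr_{p i} = x i` for
`i < i⋆`, the sequence `⟨x i : i < i⋆⟩` lies in the domain of `plus` with value `y`,
`i⋆ < σ(x 0)`, and `|⋃_{i<i⋆} F_{p i}| < σ(y)`.  Then `(y, ⋃_{i<i⋆} F_{p i})` is a
condition of `Q_o` and a common upper bound of the `p i`. -/
theorem common_upperBound_of_plusDefined {κ : Cardinal.{u}} (hκinf : ℵ₀ ≤ κ)
    (hκ : κ ^< κ = κ) (o : Iterand.{u} κ)
    (i_star : Ordinal.{u}) (h0 : (0 : Ordinal.{u}) < i_star)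
    (p : Set.Iio i_star → o.TR.Carrier × Set o.At)
    (hcond : ∀ i, IsCond o (p i))
    (x : Set.Iio i_star → o.TR.Carrier) (hx : ∀ i, (p i).1 = x i)
    (hdef : o.TR.plusDefined (Set.Iio i_star) x)
    (y : o.TR.Carrier) (hy : y = o.TR.plus (Set.Iio i_star) x)
    (hσ : i_star < (o.σ (x ⟨0, h0⟩)).ord)
    (hF : #(⋃ i, (p i).2) < o.σ y) :
    IsCond o (y, ⋃ i, (p i).2) ∧ ∀ i, condLE o (p i) (y, ⋃ i, (p i).2) := by
  have hxy : ∀ i, o.TR.le (x i) y := by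
    intro i
    rw [hy]
    exact o.isTC.plus_upperBound _ _ hdef i
  constructor
  · refine ⟨hF, ?_⟩
    intro q hq
    obtain ⟨i, hqi⟩ := Set.mem_iUnion.1 hq
    obtain ⟨hle, hA⟩ := (hcond i).2 q hqi
    have hle' : o.TR.le (o.tr q) y := o.isTC.le_trans hle (by rw [hx i]; exact hxy i)
    exact ⟨hle', o.A_upward q (p i).1 hA y (by rw [hx i]; exact hxy i)⟩
  · intro i
    exact ⟨by rw [hx i]; exact hxy i, Set.subset_iUnion (fun j => (p j).2) i⟩
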